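/- Any two reduced decompositions of a permutation σ ∈ S_n into elementary transpositions can be transformed into each other by a sequence of braid (hexagonal) moves (i, i+1, i) ↝ (i+1, i, i+1) and commutation (square) moves (i,j) ↝ (j,i) for |i−j| ≥ 2 (Matsumoto's theorem for S_n). -/

import Mathlib

/-- The product of the word `w` of elementary transpositions: the letter `i : Fin (n-1)`
stands for the elementary transposition `σᵢ = (i, i+1)` in `S_n`. -/
def wordProd {n : ℕ} (w : List (Fin (n - 1))) : Equiv.Perm (Fin n) :=
  (w.map fun i => Equiv.swap (Fin.castLE (Nat.sub_le n 1) i)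
    ⟨(i : ℕ) + 1, by omega⟩).prod

/-- `w` is a reduced decomposition of `σ`: it multiplies to `σ` and has minimal length. -/
def IsReducedWord {n : ℕ} (σ : Equiv.Perm (Fin n)) (w : List (Fin (n - 1))) : Prop :=
  wordProd w = σ ∧ ∀ w' : List (Fin (n - 1)), wordProd w' = σ → w.length ≤ w'.length

/-- A single braid (hexagonal) move `(…, i, i±1, i, …) ↝ (…, i±1, i, i±1, …)` or
commutation (square) move `(…, i, j, …) ↝ (…, j, i, …)` for `|i−j| ≥ 2`. -/
def BraidOrCommMove {n : ℕ} (w w' : List (Fin (n - 1))) : Prop :=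
  (∃ (l r : List (Fin (n - 1))) (i j : Fin (n - 1)),
      ((j : ℕ) = (i : ℕ) + 1 ∨ (i : ℕ) = (j : ℕ) + 1) ∧
      w = l ++ [i, j, i] ++ r ∧ w' = l ++ [j, i, j] ++ r) ∨
  (∃ (l r : List (Fin (n - 1))) (i j : Fin (n - 1)),
      ((i : ℕ) + 2 ≤ (j : ℕ) ∨ (j : ℕ) + 2 ≤ (i : ℕ)) ∧
      w = l ++ [i, j] ++ r ∧ w' = l ++ [j, i] ++ r)

namespace Matsu
variable {n : ℕ}

def ga (i : Fin (n - 1)) : Fin n := ⟨(i : ℕ), by omega⟩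
def gb (i : Fin (n - 1)) : Fin n := ⟨(i : ℕ) + 1, by omega⟩
def gen (i : Fin (n - 1)) : Equiv.Perm (Fin n) := Equiv.swap (ga i) (gb i)

lemma wordProd_nil : wordProd ([] : List (Fin (n-1))) = 1 := rfl

lemma wordProd_cons (i : Fin (n-1)) (w : List (Fin (n-1))) :
    wordProd (i :: w) = gen i * wordProd w := rfl

lemma gen_mul_self (i : Fin (n-1)) : gen i * gen i = 1 := Equiv.swap_mul_self _ _

lemma gen_cancel (i : Fin (n-1)) (ρ : Equiv.Perm (Fin n)) : gen i * (gen i * ρ) = ρ := by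
  rw [← mul_assoc, gen_mul_self, one_mul]

lemma swap_lt_iff {a b x y : Fin n} (hab : (b : ℕ) = (a : ℕ) + 1)
    (h1 : ¬(x = a ∧ y = b)) (h2 : ¬(x = b ∧ y = a)) :
    Equiv.swap a b x < Equiv.swap a b y ↔ x < y := by
  rw [not_and_or] at h1 h2
  simp only [Equiv.swap_apply_def]
  split_ifs
  all_goals simp only [Fin.ext_iff, Fin.lt_def, ← Fin.val_ne_iff] at *
  all_goals omega
lemma perm_apply_inv_self (σ : Equiv.Perm (Fin n)) (x : Fin n) : σ (σ⁻¹ x) = x :=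
  (Equiv.eq_symm_apply σ).mp rfl

def invSet (σ : Equiv.Perm (Fin n)) : Finset (Fin n × Fin n) :=
  Finset.univ.filter fun p => p.1 < p.2 ∧ σ p.2 < σ p.1

def N (σ : Equiv.Perm (Fin n)) : ℕ := (invSet σ).card

lemma invSet_gen_mul {σ : Equiv.Perm (Fin n)} {i : Fin (n-1)}
    (h : σ⁻¹ (ga i) < σ⁻¹ (gb i)) :
    invSet (gen i * σ) = insert (σ⁻¹ (ga i), σ⁻¹ (gb i)) (invSet σ) := by
  have hab : ((gb i : Fin n) : ℕ) = ((ga i : Fin n) : ℕ) + 1 := rfl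
  have hltab : ga i < gb i := by simp [ga, gb, Fin.lt_def]
  ext ⟨x, y⟩
  simp only [invSet, Finset.mem_insert, Finset.mem_filter, Finset.mem_univ, true_and]
  simp only [Equiv.Perm.mul_apply, Prod.mk.injEq, gen]
  constructor
  · rintro ⟨hxy, hlt⟩
    by_cases hc1 : σ x = ga i ∧ σ y = gb i
    · left
      constructor
      · apply σ.injective; rw [perm_apply_inv_self, hc1.1]
      · apply σ.injective; rw [perm_apply_inv_self, hc1.2]
    · by_cases hc2 : σ x = gb i ∧ σ y = ga i
      · rw [hc2.1, hc2.2, Equiv.swap_apply_left, Equiv.swap_apply_right] at hlt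
        exact absurd hlt (not_lt.2 hltab.le)
      · right
        refine ⟨hxy, ?_⟩
        rw [swap_lt_iff hab (by tauto) (by tauto)] at hlt
        exact hlt
  · rintro (⟨hx, hy⟩ | ⟨hxy, hlt⟩)
    · subst hx; subst hy
      refine ⟨h, ?_⟩
      rw [perm_apply_inv_self, perm_apply_inv_self, Equiv.swap_apply_left,
        Equiv.swap_apply_right]
      exact hltab
    · refine ⟨hxy, ?_⟩
      by_cases hc1 : σ y = ga i ∧ σ x = gb i
      · exfalso
        have hx : x = σ⁻¹ (gb i) := by apply σ.injective; rw [perm_apply_inv_self, hc1.2]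
        have hy : y = σ⁻¹ (ga i) := by apply σ.injective; rw [perm_apply_inv_self, hc1.1]
        rw [hx, hy] at hxy
        exact absurd (hxy.trans h) (lt_irrefl _)
      · by_cases hc2 : σ y = gb i ∧ σ x = ga i
        · rw [hc2.1, hc2.2] at hlt
          exact absurd hlt (not_lt.2 hltab.le)
        · rw [swap_lt_iff hab (by tauto) (by tauto)]
          exact hlt

lemma pair_not_mem {σ : Equiv.Perm (Fin n)} {i : Fin (n-1)} :
    (σ⁻¹ (ga i), σ⁻¹ (gb i)) ∉ invSet σ := by
  simp only [invSet, Finset.mem_filter, Finset.mem_univ, true_and, not_and,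
    perm_apply_inv_self]
  intro _
  exact not_lt.2 (by simp [ga, gb, Fin.le_def])

lemma N_gen_mul_of_lt {σ : Equiv.Perm (Fin n)} {i : Fin (n-1)}
    (h : σ⁻¹ (ga i) < σ⁻¹ (gb i)) : N (gen i * σ) = N σ + 1 := by
  rw [N, invSet_gen_mul h, Finset.card_insert_of_notMem pair_not_mem]; rfl

def Des (σ : Equiv.Perm (Fin n)) (i : Fin (n-1)) : Prop := σ⁻¹ (gb i) < σ⁻¹ (ga i)

lemma inv_gen_mul_apply (σ : Equiv.Perm (Fin n)) (i : Fin (n-1)) (x : Fin n) :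
    (gen i * σ)⁻¹ x = σ⁻¹ (gen i x) := by
  simp [gen, mul_inv_rev, Equiv.swap_inv]

lemma N_gen_mul_of_des {σ : Equiv.Perm (Fin n)} {i : Fin (n-1)}
    (h : Des σ i) : N (gen i * σ) + 1 = N σ := by
  have h2 : (gen i * σ)⁻¹ (ga i) < (gen i * σ)⁻¹ (gb i) := by
    rw [inv_gen_mul_apply, inv_gen_mul_apply, gen, Equiv.swap_apply_left,
      Equiv.swap_apply_right]
    exact h
  have := N_gen_mul_of_lt h2
  rw [gen_cancel] at this
  omega

lemma ga_ne_gb (i : Fin (n-1)) : ga i ≠ gb i := by simp [ga, gb, Fin.ext_iff]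

lemma des_or_lt (σ : Equiv.Perm (Fin n)) (i : Fin (n-1)) :
    Des σ i ∨ σ⁻¹ (ga i) < σ⁻¹ (gb i) := by
  rcases lt_trichotomy (σ⁻¹ (ga i)) (σ⁻¹ (gb i)) with h | h | h
  · exact Or.inr h
  · exact absurd (σ⁻¹.injective h) (ga_ne_gb i)
  · exact Or.inl h

lemma N_one : N (1 : Equiv.Perm (Fin n)) = 0 := by
  rw [N, Finset.card_eq_zero, invSet]
  ext ⟨x, y⟩
  simp only [Finset.mem_filter, Finset.mem_univ, true_and, Finset.notMem_empty, iff_false,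
    not_and]
  simp only [Equiv.Perm.one_apply]
  exact fun h => not_lt.2 h.le

lemma N_wordProd_le (w : List (Fin (n-1))) : N (wordProd w) ≤ w.length := by
  induction w with
  | nil => simp [wordProd_nil, N_one]
  | cons i w ih =>
    rw [wordProd_cons]
    rcases des_or_lt (wordProd w) i with h | h
    · have := N_gen_mul_of_des h
      simp only [List.length_cons]
      omega
    · rw [N_gen_mul_of_lt h]
      simp only [List.length_cons]
      omega

lemma exists_des {σ : Equiv.Perm (Fin n)} (hσ : σ ≠ 1) : ∃ i, Des σ i := by
  by_contra hc
  push_neg at hc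
  have step : ∀ k, (h : k + 1 < n) → (σ⁻¹ ⟨k, by omega⟩ : Fin n) < σ⁻¹ ⟨k + 1, h⟩ := by
    intro k h
    have hk : k < n - 1 := by omega
    rcases des_or_lt σ ⟨k, hk⟩ with hd | hlt
    · exact absurd hd (hc _)
    · exact hlt
  have mono : ∀ d k, (h : k + d + 1 < n) → (σ⁻¹ ⟨k, by omega⟩ : Fin n) < σ⁻¹ ⟨k + d + 1, h⟩ := by
    intro d
    induction d with
    | zero => exact step
    | succ d ih =>
      intro k h
      exact (ih k (by omega)).trans (by
        have := step (k + d + 1) (by omega)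
        exact this)
  have hle : ∀ k, (h : k < n) → k ≤ ((σ⁻¹ ⟨k, h⟩ : Fin n) : ℕ) := by
    intro k
    induction k with
    | zero => exact fun _ => Nat.zero_le _
    | succ k ih =>
      intro h
      have h1 := ih (by omega)
      have h2 := step k h
      rw [Fin.lt_def] at h2
      omega
  have hsum : ∑ x : Fin n, ((σ⁻¹ x : Fin n) : ℕ) = ∑ x : Fin n, (x : ℕ) :=
    Equiv.sum_comp σ⁻¹ (fun x => (x : ℕ))
  have hall : ∀ x : Fin n, (x : ℕ) ≤ ((σ⁻¹ x : Fin n) : ℕ) := fun x => by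
    have := hle x.val x.isLt
    simpa using this
  have heq : ∀ x : Fin n, σ⁻¹ x = x := by
    by_contra hne
    push_neg at hne
    obtain ⟨x, hx⟩ := hne
    have hxlt : (x : ℕ) < ((σ⁻¹ x : Fin n) : ℕ) :=
      lt_of_le_of_ne (hall x) (by simpa [Fin.ext_iff, eq_comm] using hx)
    have : ∑ y : Fin n, (y : ℕ) < ∑ y : Fin n, ((σ⁻¹ y : Fin n) : ℕ) :=
      Finset.sum_lt_sum (fun y _ => hall y) ⟨x, Finset.mem_univ x, hxlt⟩
    omega
  apply hσ
  have : σ⁻¹ = 1 := Equiv.ext heq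
  rw [← inv_inv σ, this, inv_one]

lemma exists_word (σ : Equiv.Perm (Fin n)) : ∃ w, wordProd w = σ ∧ w.length = N σ := by
  generalize h : N σ = k
  induction k using Nat.strong_induction_on generalizing σ with
  | _ k ih =>
    by_cases hσ : σ = 1
    · subst hσ
      rw [N_one] at h
      exact ⟨[], wordProd_nil, by simpa using h⟩
    · obtain ⟨i, hi⟩ := exists_des hσ
      have h2 := N_gen_mul_of_des hi
      obtain ⟨v, hv1, hv2⟩ := ih (N (gen i * σ)) (by omega) (gen i * σ) rfl
      refine ⟨i :: v, ?_, ?_⟩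
      · rw [wordProd_cons, hv1, gen_cancel]
      · simp only [List.length_cons, hv2]
        omega

lemma isReduced_iff {σ : Equiv.Perm (Fin n)} {w : List (Fin (n-1))} :
    IsReducedWord σ w ↔ wordProd w = σ ∧ w.length = N σ := by
  constructor
  · rintro ⟨h1, h2⟩
    refine ⟨h1, le_antisymm ?_ ?_⟩
    · obtain ⟨v, hv1, hv2⟩ := exists_word σ
      exact (h2 v hv1).trans hv2.le
    · rw [← h1]; exact N_wordProd_le w
  · rintro ⟨h1, h2⟩
    refine ⟨h1, fun v hv => ?_⟩
    rw [h2, ← hv]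
    exact N_wordProd_le v
lemma gen_comm {i j : Fin (n-1)} (h : (i : ℕ) + 2 ≤ (j : ℕ)) :
    gen i * gen j = gen j * gen i := by
  apply Equiv.ext
  intro x
  simp only [gen, ga, gb, Equiv.Perm.mul_apply, Equiv.swap_apply_def]
  split_ifs
  all_goals simp only [Fin.ext_iff, ← Fin.val_ne_iff] at *
  all_goals omega

lemma gen_conj (i j : Fin (n-1)) :
    gen i * gen j * gen i = Equiv.swap (gen i (ga j)) (gen i (gb j)) := by
  have : (gen i)⁻¹ = gen i := Equiv.swap_inv _ _
  rw [Equiv.swap_apply_apply, this]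
  rfl

lemma gen_braid {i j : Fin (n-1)} (h : (j : ℕ) = (i : ℕ) + 1) :
    gen i * gen j * gen i = gen j * gen i * gen j := by
  have hba : ga j = gb i := by simp [ga, gb, Fin.ext_iff, h]
  rw [gen_conj, gen_conj]
  have e1 : gen i (ga j) = ga i := by rw [hba, gen, Equiv.swap_apply_right]
  have e2 : gen i (gb j) = gb j := by
    apply Equiv.swap_apply_of_ne_of_ne <;> simp [ga, gb, Fin.ext_iff] <;> omega
  have e3 : gen j (ga i) = ga i := by
    apply Equiv.swap_apply_of_ne_of_ne <;> simp [ga, gb, Fin.ext_iff] <;> omega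
  have e4 : gen j (gb i) = gb j := by rw [← hba, gen, Equiv.swap_apply_left]
  rw [e1, e2, e3, e4]

lemma des_far {σ : Equiv.Perm (Fin n)} {i j : Fin (n-1)}
    (hij : (i : ℕ) + 2 ≤ (j : ℕ) ∨ (j : ℕ) + 2 ≤ (i : ℕ)) (hj : Des σ j) :
    Des (gen i * σ) j := by
  have e1 : gen i (ga j) = ga j := by
    apply Equiv.swap_apply_of_ne_of_ne <;> simp [ga, gb, Fin.ext_iff] <;> omega
  have e2 : gen i (gb j) = gb j := by
    apply Equiv.swap_apply_of_ne_of_ne <;> simp [ga, gb, Fin.ext_iff] <;> omega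
  rw [Des, inv_gen_mul_apply, inv_gen_mul_apply, e1, e2]
  exact hj

lemma des_adj1 {σ : Equiv.Perm (Fin n)} {i j : Fin (n-1)} (h : (j : ℕ) = (i : ℕ) + 1)
    (hi : Des σ i) (hj : Des σ j) : Des (gen i * σ) j := by
  have hba : ga j = gb i := by simp [ga, gb, Fin.ext_iff, h]
  have e1 : gen i (ga j) = ga i := by rw [hba, gen, Equiv.swap_apply_right]
  have e2 : gen i (gb j) = gb j := by
    apply Equiv.swap_apply_of_ne_of_ne <;> simp [ga, gb, Fin.ext_iff] <;> omega
  rw [Des, inv_gen_mul_apply, inv_gen_mul_apply, e1, e2]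
  calc σ⁻¹ (gb j) < σ⁻¹ (ga j) := hj
    _ = σ⁻¹ (gb i) := by rw [hba]
    _ < σ⁻¹ (ga i) := hi

lemma des_adj2 {σ : Equiv.Perm (Fin n)} {i j : Fin (n-1)} (h : (j : ℕ) = (i : ℕ) + 1)
    (hj : Des σ j) : Des (gen j * (gen i * σ)) i := by
  have hba : ga j = gb i := by simp [ga, gb, Fin.ext_iff, h]
  have e1 : gen j (gb i) = gb j := by rw [← hba, gen, Equiv.swap_apply_left]
  have e2 : gen i (gb j) = gb j := by
    apply Equiv.swap_apply_of_ne_of_ne <;> simp [ga, gb, Fin.ext_iff] <;> omega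
  have e3 : gen j (ga i) = ga i := by
    apply Equiv.swap_apply_of_ne_of_ne <;> simp [ga, gb, Fin.ext_iff] <;> omega
  have e4 : gen i (ga i) = gb i := by rw [gen, Equiv.swap_apply_left]
  rw [Des]
  simp only [inv_gen_mul_apply, e1, e3, e2, e4]
  rw [← hba]
  exact hj

lemma reduced_cons {σ : Equiv.Perm (Fin n)} {i : Fin (n-1)} {u : List (Fin (n-1))}
    (h : IsReducedWord σ (i :: u)) :
    Des σ i ∧ IsReducedWord (gen i * σ) u ∧ u.length + 1 = N σ := by
  rw [isReduced_iff] at h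
  obtain ⟨h1, h2⟩ := h
  simp only [List.length_cons] at h2
  have hu : wordProd u = gen i * σ := by rw [← h1, wordProd_cons, gen_cancel]
  have hle : N (gen i * σ) ≤ u.length := hu ▸ N_wordProd_le u
  have hdes : Des σ i := by
    rcases des_or_lt σ i with hd | hlt
    · exact hd
    · exfalso
      have := N_gen_mul_of_lt hlt
      omega
  have hN := N_gen_mul_of_des hdes
  exact ⟨hdes, isReduced_iff.mpr ⟨hu, by omega⟩, h2⟩

lemma key_lt {σ : Equiv.Perm (Fin n)} {i j : Fin (n-1)} (hij : (i : ℕ) < (j : ℕ))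
    (hi : Des σ i) (hj : Des σ j) :
    ∃ xt yt : List (Fin (n-1)), IsReducedWord σ (i :: xt) ∧ IsReducedWord σ (j :: yt) ∧
      BraidOrCommMove (i :: xt) (j :: yt) := by
  by_cases hadj : (j : ℕ) = (i : ℕ) + 1
  · -- braid case
    have d1 : Des (gen i * σ) j := des_adj1 hadj hi hj
    have d2 : Des (gen j * (gen i * σ)) i := des_adj2 hadj hj
    have n1 := N_gen_mul_of_des hi
    have n2 := N_gen_mul_of_des d1
    have n3 := N_gen_mul_of_des d2
    obtain ⟨v, hv1, hv2⟩ := exists_word (gen i * (gen j * (gen i * σ)))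
    have hx : wordProd (i :: j :: i :: v) = σ := by
      rw [wordProd_cons, wordProd_cons, wordProd_cons, hv1]
      simp only [gen_cancel]
    have hy : wordProd (j :: i :: j :: v) = σ := by
      rw [wordProd_cons, wordProd_cons, wordProd_cons, hv1]
      have : gen j * (gen i * (gen j * (gen i * (gen j * (gen i * σ)))))
          = (gen j * gen i * gen j) * (gen i * (gen j * (gen i * σ))) := by group
      rw [this, ← gen_braid hadj]
      have : (gen i * gen j * gen i) * (gen i * (gen j * (gen i * σ)))
          = gen i * (gen j * ((gen i * (gen i * (gen j * (gen i * σ)))))) := by group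
      rw [this]
      simp only [gen_cancel]
    refine ⟨j :: i :: v, i :: j :: v, isReduced_iff.mpr ⟨hx, ?_⟩,
      isReduced_iff.mpr ⟨hy, ?_⟩, Or.inl ⟨[], v, i, j, Or.inl hadj, by simp, by simp⟩⟩
    · simp only [List.length_cons, hv2]; omega
    · simp only [List.length_cons, hv2]; omega
  · -- commutation case
    have hfar : (i : ℕ) + 2 ≤ (j : ℕ) ∨ (j : ℕ) + 2 ≤ (i : ℕ) := by omega
    have d1 : Des (gen i * σ) j := des_far hfar hj
    have n1 := N_gen_mul_of_des hi
    have n2 := N_gen_mul_of_des d1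
    obtain ⟨v, hv1, hv2⟩ := exists_word (gen j * (gen i * σ))
    have hx : wordProd (i :: j :: v) = σ := by
      rw [wordProd_cons, wordProd_cons, hv1]
      simp only [gen_cancel]
    have hy : wordProd (j :: i :: v) = σ := by
      rw [wordProd_cons, wordProd_cons, hv1]
      have : gen j * (gen i * (gen j * (gen i * σ)))
          = (gen j * gen i) * (gen j * (gen i * σ)) := by group
      rw [this, ← gen_comm (by omega : (i : ℕ) + 2 ≤ (j : ℕ))]
      have : (gen i * gen j) * (gen j * (gen i * σ))
          = gen i * (gen j * (gen j * (gen i * σ))) := by group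
      rw [this]
      simp only [gen_cancel]
    refine ⟨j :: v, i :: v, isReduced_iff.mpr ⟨hx, ?_⟩, isReduced_iff.mpr ⟨hy, ?_⟩,
      Or.inr ⟨[], v, i, j, hfar, by simp, by simp⟩⟩
    · simp only [List.length_cons, hv2]; omega
    · simp only [List.length_cons, hv2]; omega

lemma move_symm {w w' : List (Fin (n-1))} (h : BraidOrCommMove w w') :
    BraidOrCommMove w' w := by
  rcases h with ⟨l, r, i, j, hc, h1, h2⟩ | ⟨l, r, i, j, hc, h1, h2⟩
  · exact Or.inl ⟨l, r, j, i, hc.symm, h2, h1⟩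
  · exact Or.inr ⟨l, r, j, i, hc.symm, h2, h1⟩

lemma key {σ : Equiv.Perm (Fin n)} {i j : Fin (n-1)} (hij : i ≠ j)
    (hi : Des σ i) (hj : Des σ j) :
    ∃ xt yt : List (Fin (n-1)), IsReducedWord σ (i :: xt) ∧ IsReducedWord σ (j :: yt) ∧
      BraidOrCommMove (i :: xt) (j :: yt) := by
  rcases lt_or_gt_of_ne (fun hv => hij (Fin.ext hv) : (i : ℕ) ≠ (j : ℕ)) with h | h
  · exact key_lt h hi hj
  · obtain ⟨yt, xt, h1, h2, h3⟩ := key_lt h hj hi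
    exact ⟨xt, yt, h2, h1, move_symm h3⟩

lemma cons_move {u v : List (Fin (n-1))} (a : Fin (n-1)) (h : BraidOrCommMove u v) :
    BraidOrCommMove (a :: u) (a :: v) := by
  rcases h with ⟨l, r, i, j, hc, h1, h2⟩ | ⟨l, r, i, j, hc, h1, h2⟩
  · exact Or.inl ⟨a :: l, r, i, j, hc, by simp [h1], by simp [h2]⟩
  · exact Or.inr ⟨a :: l, r, i, j, hc, by simp [h1], by simp [h2]⟩

lemma cons_rtg {u v : List (Fin (n-1))} (a : Fin (n-1))
    (h : Relation.ReflTransGen BraidOrCommMove u v) :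
    Relation.ReflTransGen BraidOrCommMove (a :: u) (a :: v) :=
  Relation.ReflTransGen.lift _ (fun _ _ hm => cons_move a hm) _ _ h

lemma main_aux : ∀ k : ℕ, ∀ (σ : Equiv.Perm (Fin n)) (w w' : List (Fin (n-1))),
    IsReducedWord σ w → IsReducedWord σ w' → w.length ≤ k →
    Relation.ReflTransGen BraidOrCommMove w w' := by
  intro k
  induction k with
  | zero =>
    intro σ w w' hw hw' hlen
    have hwnil : w = [] := List.length_eq_zero_iff.mp (Nat.le_zero.mp hlen)
    subst hwnil
    have hσ : σ = 1 := by rw [← hw.1, wordProd_nil]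
    have : w'.length ≤ 0 := hw'.2 [] (by rw [wordProd_nil, hσ])
    rw [List.length_eq_zero_iff.mp (Nat.le_zero.mp this)]
  | succ k ih =>
    intro σ w w' hw hw' hlen
    rcases w with _ | ⟨i, u⟩
    · have hσ : σ = 1 := by rw [← hw.1, wordProd_nil]
      have : w'.length ≤ 0 := hw'.2 [] (by rw [wordProd_nil, hσ])
      rw [List.length_eq_zero_iff.mp (Nat.le_zero.mp this)]
    rcases w' with _ | ⟨j, u'⟩
    · have hσ : σ = 1 := by rw [← hw'.1, wordProd_nil]
      have : (i :: u).length ≤ 0 := hw.2 [] (by rw [wordProd_nil, hσ])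
      simp at this
    obtain ⟨hdi, hui, hNi⟩ := reduced_cons hw
    obtain ⟨hdj, huj, hNj⟩ := reduced_cons hw'
    simp only [List.length_cons] at hlen
    by_cases hij : i = j
    · subst hij
      exact cons_rtg i (ih (gen i * σ) u u' hui huj (by omega))
    · obtain ⟨xt, yt, hx, hy, hmv⟩ := key hij hdi hdj
      obtain ⟨_, hxt, hNx⟩ := reduced_cons hx
      obtain ⟨_, hyt, hNy⟩ := reduced_cons hy
      have c1 : Relation.ReflTransGen BraidOrCommMove (i :: u) (i :: xt) :=
        cons_rtg i (ih (gen i * σ) u xt hui hxt (by omega))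
      have c2 : Relation.ReflTransGen BraidOrCommMove (j :: yt) (j :: u') :=
        cons_rtg j (ih (gen j * σ) yt u' hyt huj (by omega))
      exact (c1.trans (Relation.ReflTransGen.single hmv)).trans c2

end Matsu

theorem matsumoto (n : ℕ) (σ : Equiv.Perm (Fin n)) (w w' : List (Fin (n - 1)))
    (hw : IsReducedWord σ w) (hw' : IsReducedWord σ w') :
    Relation.ReflTransGen BraidOrCommMove w w' :=
  Matsu.main_aux w.length σ w w' hw hw' le_rfl
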